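/- arXiv:1301.2134 — 9 statements merged into one kernel-verified Lean document; each statement's English description precedes it below -/
import Mathlib

section
/- If a set W of morphisms in a category C admits a calculus of right fractions and C has enough coarse objects relative to W (for every object Y there is a coarse object X and a morphism Y → X in W), then the category of fractions C[W⁻¹] is equivalent to the full subcategory of coarse objects of C. -/
open CategoryTheory

universe v u

variable {C : Type u} [Category.{v} C]

/-- An object `X` is *coarse* relative to a class of morphisms `W` if every morphism
`x : Y ⟶ X` extends uniquely along every `w : Y ⟶ Z` in `W`. -/
def Coarse (W : MorphismProperty C) (X : C) : Prop :=
  ∀ ⦃Y Z : C⦄ (w : Y ⟶ Z), W w → ∀ x : Y ⟶ X, ∃! y : Z ⟶ X, w ≫ y = x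

/-- If `W` admits a calculus of right fractions and there are enough coarse objects
(for every `Y` there is a coarse `X` and a morphism `Y ⟶ X` in `W`), then the
category of fractions `C[W⁻¹]` is equivalent to the full subcategory of coarse objects. -/
theorem localization_equiv_coarse (W : MorphismProperty C)
    [W.HasRightCalculusOfFractions]
    (h : ∀ Y : C, ∃ (X : C) (w : Y ⟶ X), W w ∧ Coarse W X) :
    Nonempty (W.Localization ≌ ObjectProperty.FullSubcategory (Coarse W)) := by
  let F : ObjectProperty.FullSubcategory (Coarse W) ⥤ W.Localization :=
    ObjectProperty.ι (Coarse W) ⋙ W.Q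
  have hfaith : F.Faithful := by
    constructor
    intro A B f g hfg
    have : W.Q.map f.hom = W.Q.map g.hom := hfg
    rw [MorphismProperty.map_eq_iff_precomp W.Q W] at this
    obtain ⟨X, s, hs, hsfg⟩ := this
    obtain ⟨y, -, hy⟩ := B.property s hs (s ≫ f.hom)
    exact ObjectProperty.hom_ext _ (h := (hy f.hom rfl).trans (hy g.hom hsfg.symm).symm)
  have hfull : F.Full := by
    constructor
    intro A B φ
    obtain ⟨ψ, hψ⟩ := Localization.exists_rightFraction W.Q W φ
    obtain ⟨g, hg, -⟩ := B.property ψ.s ψ.hs ψ.f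
    refine ⟨ObjectProperty.homMk g, ?_⟩
    have hiso : IsIso (W.Q.map ψ.s) := Localization.inverts W.Q W ψ.s ψ.hs
    have h1 : W.Q.map ψ.s ≫ W.Q.map g = W.Q.map ψ.f := by
      rw [← W.Q.map_comp, hg]
    have h2 := ψ.map_s_comp_map W.Q (Localization.inverts W.Q W)
    rw [hψ]
    exact (cancel_epi (W.Q.map ψ.s)).1 (h1.trans h2.symm)
  have hess : F.EssSurj := by
    constructor
    intro Y₀
    obtain ⟨Y, ⟨e⟩⟩ : ∃ Y : C, Nonempty (W.Q.obj Y ≅ Y₀) :=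
      by have := Localization.essSurj W.Q W; exact ⟨_, ⟨(W.Q).objObjPreimageIso Y₀⟩⟩
    obtain ⟨X, w, hw, hX⟩ := h Y
    exact ⟨⟨X, hX⟩, ⟨(Localization.isoOfHom W.Q W w hw).symm ≪≫ e⟩⟩
  have : F.IsEquivalence := { }
  exact ⟨F.asEquivalence.symm⟩
end

section
/- If a set W of morphisms in a category C admits a calculus of right fractions and C has enough fine objects relative to W (for every object Y there is a fine object X and a morphism X → Y in W), then the category of fractions C[W⁻¹] is equivalent to the full subcategory of fine objects of C. -/
open CategoryTheory

universe v u

variable {C : Type u} [Category.{v} C]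

/-- An object `X` is *fine* relative to a class of morphisms `W` if every morphism
`y : X ⟶ Z` lifts uniquely through every `w : Y ⟶ Z` in `W`. -/
def Fine (W : MorphismProperty C) (X : C) : Prop :=
  ∀ ⦃Y Z : C⦄ (w : Y ⟶ Z), W w → ∀ y : X ⟶ Z, ∃! x : X ⟶ Y, x ≫ w = y

/-- If `W` admits a calculus of right fractions and there are enough fine objects
(for every `Y` there is a fine `X` and a morphism `X ⟶ Y` in `W`), then the category
of fractions `C[W⁻¹]` is equivalent to the full subcategory of fine objects. -/
theorem localization_equiv_fine (W : MorphismProperty C)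
    [W.HasRightCalculusOfFractions]
    (h : ∀ Y : C, ∃ (X : C) (w : X ⟶ Y), W w ∧ Fine W X) :
    Nonempty (W.Localization ≌ ObjectProperty.FullSubcategory (Fine W)) := by
  let F : ObjectProperty.FullSubcategory (Fine W) ⥤ W.Localization :=
    ObjectProperty.ι (Fine W) ⋙ W.Q
  have hfaith : F.Faithful := by
    constructor
    intro X X' f g hfg
    obtain ⟨f⟩ := f
    obtain ⟨g⟩ := g
    congr 1
    have : W.Q.map f = W.Q.map g := hfg
    rw [MorphismProperty.map_eq_iff_precomp W.Q W] at this
    obtain ⟨Y, s, hs, fac⟩ := this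
    obtain ⟨t, ht, -⟩ := X.property s hs (𝟙 _)
    calc f = t ≫ s ≫ f := by rw [← Category.assoc, ht, Category.id_comp]
    _ = t ≫ s ≫ g := by rw [fac]
    _ = g := by rw [← Category.assoc, ht, Category.id_comp]
  have hfull : F.Full := by
    constructor
    intro X X' φ
    obtain ⟨ψ, hψ⟩ := Localization.exists_rightFraction W.Q W (X := X.obj) (Y := X'.obj) φ
    obtain ⟨t, ht, -⟩ := X.property ψ.s ψ.hs (𝟙 _)
    refine ⟨InducedCategory.homMk (show X.obj ⟶ X'.obj from t ≫ ψ.f), ?_⟩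
    have hiso : IsIso (W.Q.map ψ.s) := Localization.inverts W.Q W ψ.s ψ.hs
    have h1 : W.Q.map t = inv (W.Q.map ψ.s) := by
      apply IsIso.eq_inv_of_inv_hom_id
      rw [← W.Q.map_comp, ht, W.Q.map_id]
    have h2 : W.Q.map ψ.s ≫ ψ.map W.Q (Localization.inverts W.Q W) = W.Q.map ψ.f :=
      ψ.map_s_comp_map W.Q _
    show W.Q.map (t ≫ ψ.f) = φ
    rw [hψ, W.Q.map_comp, h1, ← h2, IsIso.inv_hom_id_assoc]
  have hess : F.EssSurj := by
    constructor
    intro Z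
    have := Localization.essSurj W.Q W
    obtain ⟨Y, ⟨e⟩⟩ : ∃ Y : C, Nonempty (W.Q.obj Y ≅ Z) :=
      ⟨_, ⟨W.Q.objObjPreimageIso Z⟩⟩
    obtain ⟨X, w, hw, hX⟩ := h Y
    exact ⟨⟨X, hX⟩, ⟨(Localization.isoOfHom W.Q W w hw).trans e⟩⟩
  have : F.IsEquivalence := { }
  exact ⟨F.asEquivalence.symm⟩
end

section
/- In a category C with enough coarse objects relative to a class W of morphisms admitting a calculus of right fractions, the full subcategory of coarse objects is reflective: the inclusion of coarse objects into C has a left adjoint. -/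
open CategoryTheory

universe v u

variable {C : Type u} [Category.{v} C]

/-- If `W` admits a calculus of right fractions and there are enough coarse objects,
then the full subcategory of coarse objects is reflective: the inclusion has a left
adjoint. -/
theorem coarse_reflective (W : MorphismProperty C)
    [W.HasRightCalculusOfFractions]
    (h : ∀ Y : C, ∃ (X : C) (w : Y ⟶ X), W w ∧ Coarse W X) :
    ∃ L : C ⥤ ObjectProperty.FullSubcategory (Coarse W),
      Nonempty (L ⊣ ObjectProperty.ι (Coarse W)) := by
  choose X w hW hC using h
  let Fobj : C → ObjectProperty.FullSubcategory (Coarse W) := fun Y => ⟨X Y, hC Y⟩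
  let e : ∀ Y (Z : ObjectProperty.FullSubcategory (Coarse W)),
      (Fobj Y ⟶ Z) ≃ (Y ⟶ (ObjectProperty.ι (Coarse W)).obj Z) := fun Y Z =>
    { toFun := fun y => w Y ≫ y.hom
      invFun := fun x => ObjectProperty.homMk (Z.2 (w Y) (hW Y) x).choose
      left_inv := fun y => ObjectProperty.hom_ext (h := (Z.2 (w Y) (hW Y) (w Y ≫ y.hom)).choose_spec.2 y.hom rfl).symm
      right_inv := fun x => (Z.2 (w Y) (hW Y) x).choose_spec.1 }
  have he : ∀ Y Z Z' (g : Z ⟶ Z') (y : Fobj Y ⟶ Z),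
      e Y Z' (y ≫ g) = e Y Z y ≫ (ObjectProperty.ι (Coarse W)).map g := by
    intros; simp only [e, Equiv.coe_fn_mk, Category.assoc]; rfl
  exact ⟨Adjunction.leftAdjointOfEquiv e he, ⟨Adjunction.adjunctionOfEquivLeft e he⟩⟩
end

section
/- Let F : E → B be a fibration (in the sense of Grothendieck) such that every fibre has limits of shape D which are preserved by the reindexing functors, and suppose B has limits of shape D. Then the total category E has limits of shape D and F preserves them. -/
open CategoryTheory CategoryTheory.Limits

universe v₁ u₁ v₂ u₂ v₃ u₃

variable {B : Type u₁} [Category.{v₁} B] {E : Type u₂} [Category.{v₂} E]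

/-- A morphism is prone (cartesian) relative to a functor `F`. -/
def Prone (F : E ⥤ B) {X Y : E} (f : X ⟶ Y) : Prop :=
  ∀ ⦃Z : E⦄ (g : Z ⟶ Y) (h : F.obj Z ⟶ F.obj X),
    F.map g = h ≫ F.map f → ∃! k : Z ⟶ X, k ≫ f = g ∧ F.map k = h

/-- The fibre of `F : E ⥤ B` over `X : B`. -/
structure Fib (F : E ⥤ B) (X : B) where
  obj : E
  eq : F.obj obj = X

/-- The fibre category: morphisms are the morphisms of `E` lying over the identity. -/
instance (F : E ⥤ B) (X : B) : Category (Fib F X) where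
  Hom A C := { g : A.obj ⟶ C.obj // F.map g = eqToHom (A.eq.trans C.eq.symm) }
  id A := ⟨𝟙 A.obj, by simp⟩
  comp f g := ⟨f.1 ≫ g.1, by simp [f.2, g.2]⟩
  id_comp f := Subtype.ext (by simp)
  comp_id f := Subtype.ext (by simp)
  assoc f g h := Subtype.ext (by simp)

/-- A morphism of `E` between objects of fibres lies over `f : Y ⟶ X` in `B`. -/
def IsOver (F : E ⥤ B) {X Y : B} (f : Y ⟶ X) {A : Fib F Y} {A' : Fib F X}
    (g : A.obj ⟶ A'.obj) : Prop :=
  F.map g = eqToHom A.eq ≫ f ≫ eqToHom A'.eq.symm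

/-- `F` is a (Grothendieck) fibration: every morphism of `B` into the image of an object
admits a prone lift. -/
def IsFibration (F : E ⥤ B) : Prop :=
  ∀ (X : B) (E₀ : Fib F X) (Y : B) (f : Y ⟶ X),
    ∃ (E₁ : Fib F Y) (g : E₁.obj ⟶ E₀.obj), Prone F g ∧ IsOver F f g

noncomputable def pLift (F : E ⥤ B) {X Y Z : E} {g : X ⟶ Y} (hg : Prone F g)
    (f : Z ⟶ Y) (h : F.obj Z ⟶ F.obj X) (hh : F.map f = h ≫ F.map g) : Z ⟶ X :=
  (hg f h hh).choose

lemma pLift_fac (F : E ⥤ B) {X Y Z : E} {g : X ⟶ Y} (hg : Prone F g)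
    (f : Z ⟶ Y) (h : F.obj Z ⟶ F.obj X) (hh : F.map f = h ≫ F.map g) :
    pLift F hg f h hh ≫ g = f := (hg f h hh).choose_spec.1.1

lemma pLift_map (F : E ⥤ B) {X Y Z : E} {g : X ⟶ Y} (hg : Prone F g)
    (f : Z ⟶ Y) (h : F.obj Z ⟶ F.obj X) (hh : F.map f = h ≫ F.map g) :
    F.map (pLift F hg f h hh) = h := (hg f h hh).choose_spec.1.2

lemma pLift_unique (F : E ⥤ B) {X Y Z : E} {g : X ⟶ Y} (hg : Prone F g)
    (f : Z ⟶ Y) (h : F.obj Z ⟶ F.obj X) (hh : F.map f = h ≫ F.map g)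
    {k : Z ⟶ X} (h1 : k ≫ g = f) (h2 : F.map k = h) :
    k = pLift F hg f h hh := (hg f h hh).choose_spec.2 k ⟨h1, h2⟩

lemma Prone.comp {F : E ⥤ B} {X Y Z : E} {g : X ⟶ Y} {g' : Y ⟶ Z}
    (hg : Prone F g) (hg' : Prone F g') : Prone F (g ≫ g') := by
  intro W f h hh
  have hh' : F.map f = (h ≫ F.map g) ≫ F.map g' := by
    rw [hh, F.map_comp]; simp
  refine ⟨pLift F hg (pLift F hg' f (h ≫ F.map g) hh') h (by rw [pLift_map]), ⟨?_, ?_⟩, ?_⟩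
  · rw [← Category.assoc, pLift_fac, pLift_fac]
  · rw [pLift_map]
  · rintro k ⟨hk1, hk2⟩
    have e1 : k ≫ g = pLift F hg' f (h ≫ F.map g) hh' :=
      pLift_unique F hg' _ _ _ (by rw [Category.assoc]; exact hk1) (by rw [F.map_comp, hk2])
    exact pLift_unique F hg _ _ _ e1 hk2

theorem key {D : Type u₃} [Category.{v₃} D] (F : E ⥤ B)
    (hfib : IsFibration F)
    [HasLimitsOfShape D B]
    [∀ X : B, HasLimitsOfShape D (Fib F X)]
    (hpres : ∀ {X Y : B} (f : Y ⟶ X) (G : D ⥤ Fib F X) (G' : D ⥤ Fib F Y)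
      (α : ∀ d : D, (G'.obj d).obj ⟶ (G.obj d).obj),
      (∀ d, Prone F (α d)) → (∀ d, IsOver F f (α d)) →
      (∀ {d d' : D} (h : d ⟶ d'), (G'.map h).1 ≫ α d' = α d ≫ (G.map h).1) →
      ∀ (c : Cone G), IsLimit c →
      ∀ (c' : Cone G') (p : c'.pt.obj ⟶ c.pt.obj),
        Prone F p → IsOver F f p →
        (∀ d, (c'.π.app d).1 ≫ α d = p ≫ (c.π.app d).1) →
        Nonempty (IsLimit c'))
    (G : D ⥤ E) :
    ∃ c : Cone G, Nonempty (IsLimit c) ∧ Nonempty (IsLimit (F.mapCone c)) := by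
  classical
  choose A α hα hov using
    fun d => hfib (F.obj (G.obj d)) ⟨G.obj d, rfl⟩ (limit (G ⋙ F)) (limit.π (G ⋙ F) d)
  have hov' : ∀ d, F.map (α d) = eqToHom (A d).eq ≫ limit.π (G ⋙ F) d := fun d => by
    have := hov d; rw [IsOver] at this; simpa using this
  -- the reindexed diagram over the limit of G ⋙ F
  have AFmap_pf : ∀ {d d' : D} (h : d ⟶ d'),
      F.map (α d ≫ G.map h) = eqToHom ((A d).eq.trans (A d').eq.symm) ≫ F.map (α d') := by
    intro d d' h
    rw [F.map_comp, hov' d, hov' d', eqToHom_trans_assoc]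
    have w := limit.w (G ⋙ F) h
    simp only [Functor.comp_map] at w
    rw [Category.assoc, w]
  let lmap : ∀ {d d' : D}, (d ⟶ d') → ((A d).obj ⟶ (A d').obj) := fun {d d'} h =>
    pLift F (hα d') (α d ≫ G.map h) (eqToHom ((A d).eq.trans (A d').eq.symm)) (AFmap_pf h)
  have lmap_fac : ∀ {d d' : D} (h : d ⟶ d'), lmap h ≫ α d' = α d ≫ G.map h :=
    fun h => pLift_fac _ _ _ _ _
  have lmap_map : ∀ {d d' : D} (h : d ⟶ d'),
      F.map (lmap h) = eqToHom ((A d).eq.trans (A d').eq.symm) :=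
    fun h => pLift_map _ _ _ _ _
  let AF : D ⥤ Fib F (limit (G ⋙ F)) :=
    { obj := A
      map := fun h => ⟨lmap h, lmap_map h⟩
      map_id := fun d => Subtype.ext
        ((pLift_unique F (hα d) (α d ≫ G.map (𝟙 d))
          (eqToHom ((A d).eq.trans (A d).eq.symm)) (AFmap_pf (𝟙 d))
          (by show 𝟙 (A d).obj ≫ α d = α d ≫ G.map (𝟙 d); simp)
          (by show F.map (𝟙 (A d).obj) = eqToHom _; simp)).symm)
      map_comp := fun {d d' d''} h h' => Subtype.ext
        ((pLift_unique F (hα d'') (α d ≫ G.map (h ≫ h'))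
          (eqToHom ((A d).eq.trans (A d'').eq.symm)) (AFmap_pf (h ≫ h'))
          (by
            show (lmap h ≫ lmap h') ≫ α d'' = α d ≫ G.map (h ≫ h')
            rw [Category.assoc, lmap_fac, ← Category.assoc, lmap_fac,
              Category.assoc, ← G.map_comp])
          (by
            show F.map (lmap h ≫ lmap h') = _
            rw [F.map_comp, lmap_map, lmap_map, eqToHom_trans])).symm) }
  -- limit of AF in the fibre
  let c₀ : Cone AF := limit.cone AF
  let LA : Fib F (limit (G ⋙ F)) := c₀.pt
  -- the candidate limit cone in E
  let cE : Cone G :=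
    { pt := LA.obj
      π :=
        { app := fun d => (c₀.π.app d).1 ≫ α d
          naturality := fun d d' h => by
            have w : (c₀.π.app d ≫ AF.map h) = c₀.π.app d' := c₀.w h
            have w1 : (c₀.π.app d).1 ≫ lmap h = (c₀.π.app d').1 :=
              congrArg Subtype.val w
            simp only [Functor.const_obj_map, Category.id_comp, Category.assoc]
            rw [← w1, Category.assoc, lmap_fac]
            simp } }
  have cEmap : ∀ d, F.map (cE.π.app d) =
      eqToHom LA.eq ≫ limit.π (G ⋙ F) d := by
    intro d
    show F.map ((c₀.π.app d).1 ≫ α d) = _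
    rw [F.map_comp, (c₀.π.app d).2, hov' d, eqToHom_trans_assoc]
  refine ⟨cE, ⟨?_⟩, ⟨?_⟩⟩
  · -- cE is a limit cone
    refine IsLimit.ofExistsUnique fun s => ?_
    set m : F.obj s.pt ⟶ limit (G ⋙ F) := limit.lift (G ⋙ F) (F.mapCone s) with hm
    have mπ : ∀ d, m ≫ limit.π (G ⋙ F) d = F.map (s.π.app d) := fun d => limit.lift_π _ _
    choose A' β hβ hovβ using fun d => hfib (limit (G ⋙ F)) (A d) (F.obj s.pt) m
    have hovβ' : ∀ d, F.map (β d) = eqToHom (A' d).eq ≫ m ≫ eqToHom (A d).eq.symm :=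
      fun d => hovβ d
    have AF'pf : ∀ {d d' : D} (h : d ⟶ d'),
        F.map (β d ≫ lmap h) = eqToHom ((A' d).eq.trans (A' d').eq.symm) ≫ F.map (β d') := by
      intro d d' h
      rw [F.map_comp, hovβ' d, lmap_map, hovβ' d']
      simp
    let l'map : ∀ {d d' : D}, (d ⟶ d') → ((A' d).obj ⟶ (A' d').obj) := fun {d d'} h =>
      pLift F (hβ d') (β d ≫ lmap h) (eqToHom ((A' d).eq.trans (A' d').eq.symm)) (AF'pf h)
    have l'map_fac : ∀ {d d' : D} (h : d ⟶ d'), l'map h ≫ β d' = β d ≫ lmap h :=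
      fun h => pLift_fac _ _ _ _ _
    have l'map_map : ∀ {d d' : D} (h : d ⟶ d'),
        F.map (l'map h) = eqToHom ((A' d).eq.trans (A' d').eq.symm) :=
      fun h => pLift_map _ _ _ _ _
    let AF' : D ⥤ Fib F (F.obj s.pt) :=
      { obj := A'
        map := fun h => ⟨l'map h, l'map_map h⟩
        map_id := fun d => Subtype.ext
          ((pLift_unique F (hβ d) (β d ≫ lmap (𝟙 d))
            (eqToHom ((A' d).eq.trans (A' d).eq.symm)) (AF'pf (𝟙 d))
            (by
              show 𝟙 (A' d).obj ≫ β d = β d ≫ lmap (𝟙 d)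
              have e : lmap (𝟙 d) = 𝟙 (A d).obj := congrArg Subtype.val (AF.map_id d)
              rw [Category.id_comp, e, Category.comp_id])
            (by show F.map (𝟙 (A' d).obj) = _; simp)).symm)
        map_comp := fun {d d' d''} h h' => Subtype.ext
          ((pLift_unique F (hβ d'') (β d ≫ lmap (h ≫ h'))
            (eqToHom ((A' d).eq.trans (A' d'').eq.symm)) (AF'pf (h ≫ h'))
            (by
              show (l'map h ≫ l'map h') ≫ β d'' = β d ≫ lmap (h ≫ h')
              have e : lmap (h ≫ h') = lmap h ≫ lmap h' :=
                congrArg Subtype.val (AF.map_comp h h')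
              rw [e, Category.assoc, l'map_fac, ← Category.assoc, l'map_fac, Category.assoc])
            (by
              show F.map (l'map h ≫ l'map h') = _
              rw [F.map_comp, l'map_map, l'map_map, eqToHom_trans])).symm) }
    obtain ⟨P, p, hp, hovp⟩ := hfib (limit (G ⋙ F)) LA (F.obj s.pt) m
    have hovp' : F.map p = eqToHom P.eq ≫ m ≫ eqToHom LA.eq.symm := hovp
    have c'pf : ∀ d, F.map (p ≫ (c₀.π.app d).1)
        = eqToHom (P.eq.trans (A' d).eq.symm) ≫ F.map (β d) := by
      intro d
      rw [F.map_comp, hovp', (c₀.π.app d).2, hovβ' d]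
      simp
    let c'app : ∀ d, P ⟶ AF'.obj d := fun d =>
      ⟨pLift F (hβ d) (p ≫ (c₀.π.app d).1) (eqToHom (P.eq.trans (A' d).eq.symm)) (c'pf d),
        pLift_map _ _ _ _ _⟩
    have c'app_fac : ∀ d, (c'app d).1 ≫ β d = p ≫ (c₀.π.app d).1 := fun d => pLift_fac _ _ _ _ _
    let c' : Cone AF' :=
      { pt := P
        π :=
          { app := c'app
            naturality := fun d d' h => by
              apply Subtype.ext
              have w1 : (c₀.π.app d).1 ≫ lmap h = (c₀.π.app d').1 :=
                congrArg Subtype.val (c₀.w h)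
              have h1 : ((c'app d).1 ≫ l'map h) ≫ β d' = p ≫ (c₀.π.app d').1 := by
                rw [Category.assoc, l'map_fac, ← Category.assoc, c'app_fac d,
                  Category.assoc, w1]
              have h2 : F.map ((c'app d).1 ≫ l'map h)
                  = eqToHom (P.eq.trans (A' d').eq.symm) := by
                rw [F.map_comp, pLift_map, l'map_map, eqToHom_trans]
              have e := pLift_unique F (hβ d') (p ≫ (c₀.π.app d').1)
                (eqToHom (P.eq.trans (A' d').eq.symm)) (c'pf d') h1 h2
              show 𝟙 P.obj ≫ (c'app d').1 = (c'app d).1 ≫ l'map h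
              rw [Category.id_comp]
              exact e.symm } }
    obtain ⟨hc'⟩ := hpres m AF AF' β hβ hovβ (fun {d d'} h => l'map_fac h) c₀
      (limit.isLimit AF) c' p hp hovp c'app_fac
    have hcomp : ∀ d, Prone F (β d ≫ α d) := fun d => (hβ d).comp (hα d)
    have σpf : ∀ d, F.map (s.π.app d) = eqToHom (A' d).eq.symm ≫ F.map (β d ≫ α d) := by
      intro d
      rw [F.map_comp, hovβ' d, hov' d, ← mπ d]
      simp
    let σ : ∀ d, s.pt ⟶ (A' d).obj := fun d =>
      pLift F (hcomp d) (s.π.app d) (eqToHom (A' d).eq.symm) (σpf d)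
    have σ_fac : ∀ d, σ d ≫ β d ≫ α d = s.π.app d := fun d => pLift_fac _ _ _ _ _
    let S : Fib F (F.obj s.pt) := ⟨s.pt, rfl⟩
    let sσ : Cone AF' :=
      { pt := S
        π :=
          { app := fun d => ⟨σ d, pLift_map _ _ _ _ _⟩
            naturality := fun d d' h => by
              apply Subtype.ext
              have e1 : l'map h ≫ β d' ≫ α d' = β d ≫ α d ≫ G.map h := by
                rw [← Category.assoc, l'map_fac, Category.assoc, lmap_fac]
              have h1 : (σ d ≫ l'map h) ≫ (β d' ≫ α d') = s.π.app d' := by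
                rw [Category.assoc, e1, ← s.w h, ← σ_fac d]
                simp only [Category.assoc]
              have h2 : F.map (σ d ≫ l'map h) = eqToHom (A' d').eq.symm := by
                rw [F.map_comp, pLift_map, l'map_map, eqToHom_trans]
              have e := pLift_unique F (hcomp d') (s.π.app d')
                (eqToHom (A' d').eq.symm) (σpf d') h1 h2
              show 𝟙 S.obj ≫ σ d' = σ d ≫ l'map h
              rw [Category.id_comp]
              exact e.symm } }
    let t := hc'.lift sσ
    have t_fac : ∀ d, t ≫ c'.π.app d = sσ.π.app d := fun d => hc'.fac sσ d
    refine ⟨t.1 ≫ p, ?_, ?_⟩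
    · intro d
      have e : t.1 ≫ (c'app d).1 = σ d := congrArg Subtype.val (t_fac d)
      show (t.1 ≫ p) ≫ (c₀.π.app d).1 ≫ α d = s.π.app d
      rw [Category.assoc, ← Category.assoc p, ← c'app_fac d, ← Category.assoc,
        ← Category.assoc, e, Category.assoc]
      exact σ_fac d
    · intro u hu
      have hum : F.map u = m ≫ eqToHom LA.eq.symm := by
        have e : (F.map u ≫ eqToHom LA.eq) = m := by
          apply limit.hom_ext
          intro d
          rw [Category.assoc, ← cEmap d, ← F.map_comp, hu d, ← mπ d]
        rw [← e]; simp
      have upf : F.map u = eqToHom P.eq.symm ≫ F.map p := by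
        rw [hovp', hum]; simp
      have u'fac : pLift F hp u (eqToHom P.eq.symm) upf ≫ p = u := pLift_fac _ _ _ _ _
      have u'map : F.map (pLift F hp u (eqToHom P.eq.symm) upf) = eqToHom P.eq.symm :=
        pLift_map _ _ _ _ _
      let u'f : S ⟶ P := ⟨pLift F hp u (eqToHom P.eq.symm) upf, u'map⟩
      have key2 : ∀ d, u'f ≫ c'.π.app d = sσ.π.app d := by
        intro d
        apply Subtype.ext
        have hud : u ≫ ((c₀.π.app d).1 ≫ α d) = s.π.app d := hu d
        have h1 : (u'f.1 ≫ (c'app d).1) ≫ (β d ≫ α d) = s.π.app d := by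
          rw [Category.assoc, ← Category.assoc (c'app d).1, c'app_fac d, ← hud, ← u'fac]
          simp only [Category.assoc]
          rfl
        have h2 : F.map (u'f.1 ≫ (c'app d).1) = eqToHom (A' d).eq.symm := by
          rw [F.map_comp, u'map, pLift_map, eqToHom_trans]
        exact pLift_unique F (hcomp d) (s.π.app d) (eqToHom (A' d).eq.symm) (σpf d) h1 h2
      have et : u'f = t := hc'.uniq sσ u'f key2
      show u = t.1 ≫ p
      rw [← et]
      exact u'fac.symm
  · -- F.mapCone cE is a limit
    refine IsLimit.ofIsoLimit (limit.isLimit (G ⋙ F))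
      (Cones.ext (eqToIso LA.eq).symm (fun d => ?_))
    show limit.π (G ⋙ F) d = eqToHom LA.eq.symm ≫ F.map (cE.π.app d)
    rw [cEmap d, eqToHom_trans_assoc, eqToHom_refl, Category.id_comp]

/-- Lifting limits along a fibration: if a fibration `F : E ⥤ B` has fibrewise limits of
shape `D` preserved by reindexing (formulated via prone lifts), and `B` has limits of
shape `D`, then `E` has limits of shape `D` and `F` preserves them. -/
theorem fibration_lifts_limits {D : Type u₃} [Category.{v₃} D] (F : E ⥤ B)
    (hfib : IsFibration F)
    [HasLimitsOfShape D B]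
    [∀ X : B, HasLimitsOfShape D (Fib F X)]
    (hpres : ∀ {X Y : B} (f : Y ⟶ X) (G : D ⥤ Fib F X) (G' : D ⥤ Fib F Y)
      (α : ∀ d : D, (G'.obj d).obj ⟶ (G.obj d).obj),
      (∀ d, Prone F (α d)) → (∀ d, IsOver F f (α d)) →
      (∀ {d d' : D} (h : d ⟶ d'), (G'.map h).1 ≫ α d' = α d ≫ (G.map h).1) →
      ∀ (c : Cone G), IsLimit c →
      ∀ (c' : Cone G') (p : c'.pt.obj ⟶ c.pt.obj),
        Prone F p → IsOver F f p →
        (∀ d, (c'.π.app d).1 ≫ α d = p ≫ (c.π.app d).1) →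
        Nonempty (IsLimit c')) :
    HasLimitsOfShape D E ∧ Nonempty (PreservesLimitsOfShape D F) := by
  have h1 : HasLimitsOfShape D E :=
    ⟨fun G => HasLimit.mk ⟨(key F hfib hpres G).choose, (key F hfib hpres G).choose_spec.1.some⟩⟩
  refine ⟨h1, ⟨⟨fun {K} => preservesLimit_of_preserves_limit_cone
    ((key F hfib hpres K).choose_spec.1.some) ((key F hfib hpres K).choose_spec.2.some)⟩⟩⟩
end

section
/- A fibred locale F : F → B (over a regular category B) is separated if and only if for every regular epimorphism e in B, the composite ∃_e ∘ F_e is naturally isomorphic to the identity functor on the fibre over the codomain of e. -/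
open CategoryTheory CategoryTheory.Limits

universe w v u

/-- A fibred locale over a base category `B`, presented as an indexed preorder:
a preordered fibre over each object, reindexing, indexed coproducts `ex` left adjoint
to reindexing, fibrewise finite products (top and binary meets) preserved by
reindexing, the Beck–Chevalley condition over pullback squares, and the Frobenius
condition.  (The total functor of such a fibration is automatically faithful.) -/
structure FibredLocale (B : Type u) [Category.{v} B] where
  Fib : B → Type w
  le : ∀ {X : B}, Fib X → Fib X → Prop
  le_refl : ∀ {X : B} (U : Fib X), le U U
  le_trans : ∀ {X : B} {U V W : Fib X}, le U V → le V W → le U W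
  reind : ∀ {X Y : B}, (X ⟶ Y) → Fib Y → Fib X
  reind_mono : ∀ {X Y : B} (f : X ⟶ Y) {U V : Fib Y}, le U V → le (reind f U) (reind f V)
  reind_id_le : ∀ {X : B} (U : Fib X), le (reind (𝟙 X) U) U
  le_reind_id : ∀ {X : B} (U : Fib X), le U (reind (𝟙 X) U)
  reind_comp_le : ∀ {X Y Z : B} (f : X ⟶ Y) (g : Y ⟶ Z) (U : Fib Z),
    le (reind (f ≫ g) U) (reind f (reind g U))
  le_reind_comp : ∀ {X Y Z : B} (f : X ⟶ Y) (g : Y ⟶ Z) (U : Fib Z),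
    le (reind f (reind g U)) (reind (f ≫ g) U)
  ex : ∀ {X Y : B}, (X ⟶ Y) → Fib X → Fib Y
  ex_adj : ∀ {X Y : B} (f : X ⟶ Y) (U : Fib X) (V : Fib Y),
    le (ex f U) V ↔ le U (reind f V)
  top : ∀ X : B, Fib X
  le_top : ∀ {X : B} (U : Fib X), le U (top X)
  inf : ∀ {X : B}, Fib X → Fib X → Fib X
  inf_le_left : ∀ {X : B} (U V : Fib X), le (inf U V) U
  inf_le_right : ∀ {X : B} (U V : Fib X), le (inf U V) V
  le_inf : ∀ {X : B} {U V W : Fib X}, le W U → le W V → le W (inf U V)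
  le_reind_top : ∀ {X Y : B} (f : X ⟶ Y), le (top X) (reind f (top Y))
  le_reind_inf : ∀ {X Y : B} (f : X ⟶ Y) (U V : Fib Y),
    le (inf (reind f U) (reind f V)) (reind f (inf U V))
  beck : ∀ {P X Y Z : B} (fst : P ⟶ X) (snd : P ⟶ Y) (g : X ⟶ Z) (h : Y ⟶ Z),
    IsPullback fst snd g h → ∀ U : Fib X,
      le (ex snd (reind fst U)) (reind h (ex g U)) ∧
      le (reind h (ex g U)) (ex snd (reind fst U))
  frobenius_le : ∀ {X Y : B} (f : X ⟶ Y) (U : Fib X) (V : Fib Y),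
    le (ex f (inf U (reind f V))) (inf (ex f U) V)
  le_frobenius : ∀ {X Y : B} (f : X ⟶ Y) (U : Fib X) (V : Fib Y),
    le (inf (ex f U) V) (ex f (inf U (reind f V)))

namespace FibredLocale

variable {B : Type u} [Category.{v} B] (L : FibredLocale.{w} B)

/-- Isomorphism in a fibre of a fibred locale: mutual inequality. -/
def equiv {X : B} (U V : L.Fib X) : Prop := L.le U V ∧ L.le V U

/-- A fibred locale is separated if `∃_e ⊤ ≅ ⊤` for every regular epimorphism `e`. -/
def Separated : Prop :=
  ∀ {X Y : B} (e : X ⟶ Y), Nonempty (RegularEpi e) → L.equiv (L.ex e (L.top X)) (L.top Y)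

end FibredLocale

/-- A fibred locale over a regular category is separated iff `∃_e ∘ e⁻¹` is (pointwise)
isomorphic to the identity on the fibre over the codomain, for every regular epi `e`. -/
theorem separated_iff_ex_reind_iso_id {B : Type u} [Category.{v} B]
    [HasFiniteLimits B]
    (hcoeq : ∀ {X Y : B} (f : X ⟶ Y),
      HasCoequalizer (pullback.fst f f) (pullback.snd f f))
    (hstab : ∀ {X Y Z : B} (f : X ⟶ Y) (g : Z ⟶ Y),
      Nonempty (RegularEpi f) → Nonempty (RegularEpi (pullback.snd f g)))
    (L : FibredLocale.{w} B) :
    L.Separated ↔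
      ∀ {X Y : B} (e : X ⟶ Y), Nonempty (RegularEpi e) →
        ∀ V : L.Fib Y, L.equiv (L.ex e (L.reind e V)) V := by
  constructor
  · intro hsep X Y e he V
    obtain ⟨h1, h2⟩ := hsep e he
    constructor
    · exact (L.ex_adj e (L.reind e V) V).mpr (L.le_refl _)
    · -- V ≤ inf (ex e ⊤) V ≤ ex e (inf ⊤ (e*V)) ≤ ex e (e*V)
      have unit : L.le (L.reind e V) (L.reind e (L.ex e (L.reind e V))) :=
        (L.ex_adj e (L.reind e V) (L.ex e (L.reind e V))).mp (L.le_refl _)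
      have hmono : L.le (L.ex e (L.inf (L.top X) (L.reind e V))) (L.ex e (L.reind e V)) :=
        (L.ex_adj e _ _).mpr (L.le_trans (L.inf_le_right _ _) unit)
      have hV : L.le V (L.inf (L.ex e (L.top X)) V) :=
        L.le_inf (L.le_trans (L.le_top V) h2) (L.le_refl V)
      exact L.le_trans hV (L.le_trans (L.le_frobenius e (L.top X) V) hmono)
  · intro h X Y e he
    obtain ⟨h1, h2⟩ := h e he (L.top Y)
    refine ⟨L.le_top _, ?_⟩
    have unit : L.le (L.top X) (L.reind e (L.ex e (L.top X))) :=
      (L.ex_adj e (L.top X) (L.ex e (L.top X))).mp (L.le_refl _)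
    have : L.le (L.ex e (L.reind e (L.top Y))) (L.ex e (L.top X)) :=
      (L.ex_adj e _ _).mpr (L.le_trans (L.le_top _) unit)
    exact L.le_trans h2 this
end

section
/- In a separated fibred locale F : F → B over a regular category, every span (p : Y → C, s : Y → X) with p prone and s supine factors through a span (p' : Y' → C, s' : Y' → X) with p' prone, s' supine, and (p', s') : Y' → C × X a monomorphism. -/
open CategoryTheory CategoryTheory.Limits

universe w v u

namespace FibredLocale

variable {B : Type u} [Category.{v} B] (L : FibredLocale.{w} B)

theorem equiv_symm {X : B} {U V : L.Fib X} (h : L.equiv U V) : L.equiv V U := ⟨h.2, h.1⟩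

theorem equiv_trans {X : B} {U V W : L.Fib X} (h : L.equiv U V) (h' : L.equiv V W) :
    L.equiv U W := ⟨L.le_trans h.1 h'.1, L.le_trans h'.2 h.2⟩

theorem le_ex_reind {X Y : B} (f : X ⟶ Y) (U : L.Fib X) : L.le U (L.reind f (L.ex f U)) :=
  (L.ex_adj f U _).1 (L.le_refl _)

theorem ex_reind_le {X Y : B} (f : X ⟶ Y) (V : L.Fib Y) : L.le (L.ex f (L.reind f V)) V :=
  (L.ex_adj f _ V).2 (L.le_refl _)

theorem ex_mono' {X Y : B} (f : X ⟶ Y) {U V : L.Fib X} (h : L.le U V) :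
    L.le (L.ex f U) (L.ex f V) :=
  (L.ex_adj f U _).2 (L.le_trans h (L.le_ex_reind f V))

theorem ex_congr {X Y : B} (f : X ⟶ Y) {U V : L.Fib X} (h : L.equiv U V) :
    L.equiv (L.ex f U) (L.ex f V) := ⟨L.ex_mono' f h.1, L.ex_mono' f h.2⟩

theorem ex_comp {X Y Z : B} (f : X ⟶ Y) (g : Y ⟶ Z) (U : L.Fib X) :
    L.equiv (L.ex (f ≫ g) U) (L.ex g (L.ex f U)) := by
  constructor
  · refine (L.ex_adj _ _ _).2 (L.le_trans ?_ (L.le_reind_comp f g _))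
    exact L.le_trans (L.le_ex_reind f U) (L.reind_mono f (L.le_ex_reind g _))
  · refine (L.ex_adj _ _ _).2 ((L.ex_adj _ _ _).2 ?_)
    exact L.le_trans (L.le_ex_reind (f ≫ g) U) (L.reind_comp_le f g _)

theorem reind_comp_equiv {X Y Z : B} (f : X ⟶ Y) (g : Y ⟶ Z) (U : L.Fib Z) :
    L.equiv (L.reind (f ≫ g) U) (L.reind f (L.reind g U)) :=
  ⟨L.reind_comp_le f g U, L.le_reind_comp f g U⟩

theorem ex_reind_of_regularEpi (hsep : L.Separated) {X Y : B} (e : X ⟶ Y)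
    (he : Nonempty (RegularEpi e)) (U : L.Fib Y) : L.equiv (L.ex e (L.reind e U)) U := by
  constructor
  · exact L.ex_reind_le e U
  · have h1 : L.le U (L.inf (L.ex e (L.top X)) U) :=
      L.le_inf (L.le_trans (L.le_top U) (hsep e he).2) (L.le_refl U)
    refine L.le_trans h1 (L.le_trans (L.le_frobenius e (L.top X) U) ?_)
    exact L.ex_mono' e (L.inf_le_right _ _)

end FibredLocale


/-- Mono part of the regular image factorisation: if `k = e ≫ m` with `e` a regular
epi whose kernel pair agrees with that of `k`, and regular epis are stable under
pullback, then `m` is monic. -/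
theorem aux_mono_of_image {B : Type u} [Category.{v} B] [HasFiniteLimits B]
    (hstab : ∀ {X Y Z : B} (f : X ⟶ Y) (g : Z ⟶ Y),
      Nonempty (RegularEpi f) → Nonempty (RegularEpi (pullback.snd f g)))
    {Z W Z' : B} (k : Z ⟶ W) (e : Z ⟶ Z') (m : Z' ⟶ W)
    (hem : e ≫ m = k) (hre : Nonempty (RegularEpi e))
    (key : ∀ {V : B} (u v : V ⟶ Z), u ≫ k = v ≫ k → u ≫ e = v ≫ e) : Mono m := by
  have hd : pullback.fst m m ≫ m = pullback.snd m m ≫ m := pullback.condition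
  haveI : Epi (pullback.snd e (pullback.fst m m)) :=
    @RegularEpi.epi _ _ _ _ _ (hstab e (pullback.fst m m) hre).some
  haveI : Epi (pullback.snd e (pullback.snd e (pullback.fst m m) ≫ pullback.snd m m)) :=
    @RegularEpi.epi _ _ _ _ _ (hstab e _ hre).some
  haveI hqe : Epi (pullback.snd e (pullback.snd e (pullback.fst m m) ≫ pullback.snd m m) ≫
      pullback.snd e (pullback.fst m m)) := epi_comp _ _
  have he1 : (pullback.snd e (pullback.snd e (pullback.fst m m) ≫ pullback.snd m m) ≫
        pullback.fst e (pullback.fst m m)) ≫ e =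
      (pullback.snd e (pullback.snd e (pullback.fst m m) ≫ pullback.snd m m) ≫
        pullback.snd e (pullback.fst m m)) ≫ pullback.fst m m := by
    rw [Category.assoc, Category.assoc, pullback.condition]
  have he2 : pullback.fst e (pullback.snd e (pullback.fst m m) ≫ pullback.snd m m) ≫ e =
      (pullback.snd e (pullback.snd e (pullback.fst m m) ≫ pullback.snd m m) ≫
        pullback.snd e (pullback.fst m m)) ≫ pullback.snd m m := by
    rw [pullback.condition, Category.assoc]
  have hkk : (pullback.snd e (pullback.snd e (pullback.fst m m) ≫ pullback.snd m m) ≫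
        pullback.fst e (pullback.fst m m)) ≫ k =
      pullback.fst e (pullback.snd e (pullback.fst m m) ≫ pullback.snd m m) ≫ k := by
    rw [← hem, ← Category.assoc, ← Category.assoc, he1, he2,
      Category.assoc, Category.assoc, hd]
    simp only [Category.assoc]
  have heq := key _ _ hkk
  have hqd : (pullback.snd e (pullback.snd e (pullback.fst m m) ≫ pullback.snd m m) ≫
        pullback.snd e (pullback.fst m m)) ≫ pullback.fst m m =
      (pullback.snd e (pullback.snd e (pullback.fst m m) ≫ pullback.snd m m) ≫
        pullback.snd e (pullback.fst m m)) ≫ pullback.snd m m := by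
    rw [← he1, ← he2, heq]
  have hdd : pullback.fst m m = pullback.snd m m := (cancel_epi _).1 hqd
  constructor
  intro V x y hxy
  have hx : pullback.lift x y hxy ≫ pullback.fst m m = x := pullback.lift_fst _ _ _
  have hy : pullback.lift x y hxy ≫ pullback.snd m m = y := pullback.lift_snd _ _ _
  calc x = pullback.lift x y hxy ≫ pullback.fst m m := hx.symm
    _ = pullback.lift x y hxy ≫ pullback.snd m m := by rw [hdd]
    _ = y := hy

/-- In a separated fibred locale over a regular category, every prone-supine span
(encoded by its base span `(g : Z ⟶ A, h : Z ⟶ X)` together with the equation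
`∃_h (g⁻¹ C') ≅ X'`) factors through a prone-supine span whose base pair of legs
`(m₀, m₁)` is jointly monic. -/
theorem separated_span_factors_through_monic_span {B : Type u} [Category.{v} B]
    [HasFiniteLimits B]
    (hcoeq : ∀ {X Y : B} (f : X ⟶ Y),
      HasCoequalizer (pullback.fst f f) (pullback.snd f f))
    (hstab : ∀ {X Y Z : B} (f : X ⟶ Y) (g : Z ⟶ Y),
      Nonempty (RegularEpi f) → Nonempty (RegularEpi (pullback.snd f g)))
    (L : FibredLocale.{w} B) (hsep : L.Separated)
    {A X Z : B} (C' : L.Fib A) (X' : L.Fib X) (g : Z ⟶ A) (h : Z ⟶ X)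
    (hspan : L.equiv (L.ex h (L.reind g C')) X') :
    ∃ (Z' : B) (m₀ : Z' ⟶ A) (m₁ : Z' ⟶ X) (e : Z ⟶ Z'),
      e ≫ m₀ = g ∧ e ≫ m₁ = h ∧ Mono (prod.lift m₀ m₁) ∧
      L.equiv (L.ex m₁ (L.reind m₀ C')) X' := by
  obtain ⟨Z', e, m, hem, hre, key⟩ :
      ∃ (Z' : B) (e : Z ⟶ Z') (m : Z' ⟶ A ⨯ X),
        e ≫ m = prod.lift g h ∧ Nonempty (RegularEpi e) ∧
        (∀ {V : B} (u v : V ⟶ Z),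
          u ≫ prod.lift g h = v ≫ prod.lift g h → u ≫ e = v ≫ e) := by
    haveI := hcoeq (prod.lift g h)
    refine ⟨_, coequalizer.π _ _,
      coequalizer.desc (prod.lift g h) pullback.condition,
      coequalizer.π_desc _ _, ⟨coequalizerRegular _ _⟩, ?_⟩
    intro V u v huv
    calc u ≫ coequalizer.π _ _
        = pullback.lift u v huv ≫
            pullback.fst (prod.lift g h) (prod.lift g h) ≫ coequalizer.π _ _ := by
          rw [← Category.assoc, pullback.lift_fst]
      _ = pullback.lift u v huv ≫
            pullback.snd (prod.lift g h) (prod.lift g h) ≫ coequalizer.π _ _ := by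
          rw [coequalizer.condition]
      _ = v ≫ coequalizer.π _ _ := by rw [← Category.assoc, pullback.lift_snd]
  have hmono : Mono m := aux_mono_of_image hstab (prod.lift g h) e m hem hre key
  have hg : e ≫ (m ≫ prod.fst) = g := by rw [← Category.assoc, hem, prod.lift_fst]
  have hh : e ≫ (m ≫ prod.snd) = h := by rw [← Category.assoc, hem, prod.lift_snd]
  refine ⟨Z', m ≫ prod.fst, m ≫ prod.snd, e, hg, hh, ?_, ?_⟩
  · have hl : prod.lift (m ≫ prod.fst) (m ≫ prod.snd) = m := by
      apply Limits.prod.hom_ext <;> simp only [prod.lift_fst, prod.lift_snd]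
    rw [hl]; exact hmono
  · have chain : L.equiv (L.ex (e ≫ (m ≫ prod.snd)) (L.reind (e ≫ (m ≫ prod.fst)) C'))
        (L.ex (m ≫ prod.snd) (L.reind (m ≫ prod.fst) C')) :=
      L.equiv_trans (L.equiv_trans
        (L.ex_congr _ (L.reind_comp_equiv e (m ≫ prod.fst) C'))
        (L.ex_comp e (m ≫ prod.snd) _))
        (L.ex_congr _ (L.ex_reind_of_regularEpi hsep e hre _))
    rw [hg, hh] at chain
    exact L.equiv_trans (L.equiv_symm chain) hspan
end

section
/- In a fibred locale, the class of supine monomorphisms admits a calculus of right fractions: it contains all identities, is closed under composition, supine monos are stable under pullback in the total category, and any parallel pair equalized after composing with a supine mono is already equal. -/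
open CategoryTheory CategoryTheory.Limits

universe w v u

namespace FibredLocale

variable {B : Type u} [Category.{v} B]

/-- The total category of a fibred locale (Grothendieck construction). -/
def Tot (L : FibredLocale.{w} B) := Σ X : B, L.Fib X

instance (L : FibredLocale.{w} B) : Category (Tot L) where
  Hom A C := { f : A.1 ⟶ C.1 // L.le A.2 (L.reind f C.2) }
  id A := ⟨𝟙 A.1, L.le_reind_id A.2⟩
  comp {A M C} f g := ⟨f.1 ≫ g.1,
    L.le_trans f.2 (L.le_trans (L.reind_mono f.1 g.2) (L.le_reind_comp f.1 g.1 C.2))⟩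
  id_comp f := Subtype.ext (by simp)
  comp_id f := Subtype.ext (by simp)
  assoc f g h := Subtype.ext (by simp)

/-- The projection functor from the total category to the base. -/
def projF (L : FibredLocale.{w} B) : Tot L ⥤ B where
  obj A := A.1
  map f := f.1
  map_id _ := rfl
  map_comp _ _ := rfl

end FibredLocale

open FibredLocale

/-- A morphism is supine (cocartesian) relative to a functor `F`. -/
def Supine {E B' : Type*} [Category E] [Category B'] (F : E ⥤ B') {X Y : E} (f : X ⟶ Y) : Prop :=
  ∀ ⦃Z : E⦄ (g : X ⟶ Z) (h : F.obj Y ⟶ F.obj Z),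
    F.map g = F.map f ≫ h → ∃! k : Y ⟶ Z, f ≫ k = g ∧ F.map k = h

variable {B : Type u} [Category.{v} B]

/-- The class of supine monomorphisms of a fibred locale. -/
def SupineMono (L : FibredLocale.{w} B) {A C : Tot L} (w : A ⟶ C) : Prop :=
  Supine (projF L) w ∧ Mono w


section Aux

variable {B : Type u} [Category.{v} B]

lemma FL.unit (L : FibredLocale.{w} B) {X Y : B} (f : X ⟶ Y) (U : L.Fib X) :
    L.le U (L.reind f (L.ex f U)) := (L.ex_adj f U _).mp (L.le_refl _)

lemma FL.comp_val {L : FibredLocale.{w} B} {A C D : Tot L} (f : A ⟶ C) (g : C ⟶ D) :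
    (f ≫ g).1 = f.1 ≫ g.1 := rfl

lemma FL.le_ex_of_supine {L : FibredLocale.{w} B} {A C : Tot L} (f : A ⟶ C)
    (hf : Supine (projF L) f) : L.le C.2 (L.ex f.1 A.2) := by
  obtain ⟨k, ⟨hk1, hk2⟩, _⟩ :=
    hf (Z := ⟨C.1, L.ex f.1 A.2⟩) ⟨f.1, FL.unit L f.1 A.2⟩ (𝟙 C.1)
      (by simp [projF])
  have hk2' : k.1 = 𝟙 C.1 := hk2
  have hk := k.2
  rw [hk2'] at hk
  exact L.le_trans hk (L.reind_id_le _)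

lemma FL.supine_of_le_ex {L : FibredLocale.{w} B} {A C : Tot L} (f : A ⟶ C)
    (h : L.le C.2 (L.ex f.1 A.2)) : Supine (projF L) f := by
  intro Z g k hk
  have hk' : g.1 = f.1 ≫ k := hk
  refine ⟨⟨k, ?_⟩, ⟨Subtype.ext hk'.symm, rfl⟩, ?_⟩
  · have hg : L.le A.2 (L.reind g.1 Z.2) := g.2
    rw [hk'] at hg
    have : L.le A.2 (L.reind f.1 (L.reind k Z.2)) :=
      L.le_trans hg (L.reind_comp_le f.1 k Z.2)
    exact L.le_trans h ((L.ex_adj f.1 A.2 (L.reind k Z.2)).mpr this)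
  · rintro m ⟨-, hm2⟩
    exact Subtype.ext hm2

lemma FL.mono_base {L : FibredLocale.{w} B} {A C : Tot L} (f : A ⟶ C) (hf : Mono f) :
    Mono f.1 := by
  constructor
  intro T a b hab
  let T' : Tot L := ⟨T, L.inf (L.reind a A.2) (L.reind b A.2)⟩
  have ha : (⟨a, L.inf_le_left _ _⟩ : T' ⟶ A) ≫ f = (⟨b, L.inf_le_right _ _⟩ : T' ⟶ A) ≫ f :=
    Subtype.ext hab
  have := hf.right_cancellation _ _ ha
  exact congrArg Subtype.val this

lemma FL.mono_of_base {L : FibredLocale.{w} B} {A C : Tot L} (f : A ⟶ C) (hf : Mono f.1) :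
    Mono f := by
  constructor
  intro T a b hab
  have : a.1 ≫ f.1 = b.1 ≫ f.1 := congrArg Subtype.val hab
  exact Subtype.ext (hf.right_cancellation _ _ this)

end Aux

/-- In a fibred locale, the supine monomorphisms of the total category admit a calculus
of right fractions: they contain identities, are closed under composition, are stable
under pullback in the total category, and any parallel pair equalized by a supine
monomorphism is already equal. -/
theorem supine_mono_calculus_of_right_fractions
    [HasFiniteLimits B] (L : FibredLocale.{w} B) :
    (∀ A : Tot L, SupineMono L (𝟙 A)) ∧
    (∀ {A C D : Tot L} (w : A ⟶ C) (w' : C ⟶ D),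
      SupineMono L w → SupineMono L w' → SupineMono L (w ≫ w')) ∧
    (∀ {A C Y' : Tot L} (w : A ⟶ C) (f : Y' ⟶ C), SupineMono L w →
      ∃ (A' : Tot L) (w' : A' ⟶ Y') (f' : A' ⟶ A),
        SupineMono L w' ∧ IsPullback f' w' w f) ∧
    (∀ {Z A C : Tot L} (f g : Z ⟶ A) (w : A ⟶ C),
      SupineMono L w → f ≫ w = g ≫ w → f = g) := by
  refine ⟨?_, ?_, ?_, ?_⟩
  · -- identities
    intro A
    refine ⟨FL.supine_of_le_ex _ ?_, inferInstance⟩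
    have h1 : L.le A.2 (L.reind (𝟙 A.1) (L.ex (𝟙 A.1) A.2)) := FL.unit L _ _
    exact L.le_trans h1 (L.reind_id_le _)
  · -- composition
    intro A C D w w' hw hw'
    constructor
    · apply FL.supine_of_le_ex
      have h1 : L.le C.2 (L.ex w.1 A.2) := FL.le_ex_of_supine w hw.1
      have h2 : L.le D.2 (L.ex w'.1 C.2) := FL.le_ex_of_supine w' hw'.1
      have hmono : L.le (L.ex w'.1 C.2) (L.ex w'.1 (L.ex w.1 A.2)) :=
        (L.ex_adj _ _ _).mpr (L.le_trans h1 (FL.unit L _ _))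
      have h3 : L.le (L.ex w'.1 (L.ex w.1 A.2)) (L.ex (w.1 ≫ w'.1) A.2) := by
        refine (L.ex_adj _ _ _).mpr ((L.ex_adj _ _ _).mpr ?_)
        exact L.le_trans (FL.unit L (w.1 ≫ w'.1) A.2) (L.reind_comp_le _ _ _)
      exact L.le_trans h2 (L.le_trans hmono h3)
    · haveI := hw.2; haveI := hw'.2; exact mono_comp w w'
  · -- pullback stability
    intro A C Y' w f hw
    haveI : Mono w.1 := FL.mono_base w hw.2
    set P := pullback w.1 f.1 with hP
    set p : P ⟶ A.1 := pullback.fst w.1 f.1 with hp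
    set q : P ⟶ Y'.1 := pullback.snd w.1 f.1 with hq
    have hcond : p ≫ w.1 = q ≫ f.1 := pullback.condition
    set A' : Tot L := ⟨P, L.inf (L.reind p A.2) (L.reind q Y'.2)⟩ with hA'
    set f' : A' ⟶ A := ⟨p, L.inf_le_left _ _⟩ with hf'
    set w' : A' ⟶ Y' := ⟨q, L.inf_le_right _ _⟩ with hw'def
    refine ⟨A', w', f', ⟨?_, ?_⟩, ?_⟩
    · -- supine
      apply FL.supine_of_le_ex
      have hC : L.le C.2 (L.ex w.1 A.2) := FL.le_ex_of_supine w hw.1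
      have h1 : L.le Y'.2 (L.reind f.1 (L.ex w.1 A.2)) :=
        L.le_trans f.2 (L.reind_mono f.1 hC)
      have hbeck := (L.beck p q w.1 f.1 (IsPullback.of_hasPullback w.1 f.1) A.2).2
      have h2 : L.le Y'.2 (L.ex q (L.reind p A.2)) := L.le_trans h1 hbeck
      have h3 : L.le Y'.2 (L.inf (L.ex q (L.reind p A.2)) Y'.2) :=
        L.le_inf h2 (L.le_refl _)
      exact L.le_trans h3 (L.le_frobenius q (L.reind p A.2) Y'.2)
    · -- mono
      exact FL.mono_of_base w' inferInstance
    · -- IsPullback in Tot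
      have comm : f' ≫ w = w' ≫ f := Subtype.ext hcond
      refine IsPullback.of_isLimit' ⟨comm⟩ ?_
      refine PullbackCone.IsLimit.mk comm
        (fun s => ⟨pullback.lift s.fst.1 s.snd.1 (congrArg Subtype.val s.condition), ?_⟩)
        (fun s => Subtype.ext (pullback.lift_fst _ _ _))
        (fun s => Subtype.ext (pullback.lift_snd _ _ _))
        (fun s m h1 h2 => Subtype.ext (pullback.hom_ext
          (by rw [pullback.lift_fst]; exact congrArg Subtype.val h1)
          (by rw [pullback.lift_snd]; exact congrArg Subtype.val h2)))
      · set t := pullback.lift s.fst.1 s.snd.1 (congrArg Subtype.val s.condition) with ht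
        have e1 : s.fst.1 = t ≫ p := (pullback.lift_fst _ _ _).symm
        have e2 : s.snd.1 = t ≫ q := (pullback.lift_snd _ _ _).symm
        have l1 : L.le s.pt.2 (L.reind t (L.reind p A.2)) := by
          have := s.fst.2; rw [e1] at this
          exact L.le_trans this (L.reind_comp_le _ _ _)
        have l2 : L.le s.pt.2 (L.reind t (L.reind q Y'.2)) := by
          have := s.snd.2; rw [e2] at this
          exact L.le_trans this (L.reind_comp_le _ _ _)
        exact L.le_trans (L.le_inf l1 l2) (L.le_reind_inf t _ _)
  · -- right cancellation
    intro Z A C f g w hw h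
    haveI := hw.2
    exact (cancel_mono w).mp h
end

section
/- Let A be an order partial combinatory algebra and φ a combinatory complete external filter on A. Define on downsets U, V of A: U ≪ V iff the downset U ⇒ V = {a ∈ A | ∀b ∈ U, ab is defined and ab ∈ V} belongs to φ. Then ≪ is a preorder on downsets of A; moreover the preorder has finite meets given by pairing and ⇒ is a Heyting implication with respect to this meet: W ≪ (U ⇒ V) iff (W ∧ U) ≪ V, where W ∧ U is defined via a pairing combinator. -/
variable {A : Type*} [Preorder A]

/-- The partial combinatory functions of a partial applicative structure `(A, ap)`. -/
inductive PCF {α : Type*} (ap : α → α → Option α) : (n : ℕ) → ((Fin n → α) → Option α) → Prop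
  | proj (n : ℕ) (i : Fin n) : PCF ap n fun x => some (x i)
  | app {n : ℕ} {f g : (Fin n → α) → Option α} :
      PCF ap n f → PCF ap n g →
      PCF ap n fun x => (f x).bind fun a => (g x).bind fun b => ap a b

/-- Iterated application `r x₁ ⋯ xₙ`. -/
def apTuple {α : Type*} (ap : α → α → Option α) (r : α) {n : ℕ} (x : Fin n → α) :
    Option α :=
  (List.ofFn x).foldlM ap r

/-- The application is monotone: if `x ≤ x'`, `y ≤ y'` and `x'y'` is defined, then
`xy` is defined and `xy ≤ x'y'`. -/
def MonotoneAp (ap : A → A → Option A) : Prop :=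
  ∀ x x' y y' z' : A, x ≤ x' → y ≤ y' → ap x' y' = some z' →
    ∃ z : A, ap x y = some z ∧ z ≤ z'

/-- Downward closed subsets. -/
def IsDownset (U : Set A) : Prop := ∀ ⦃a b : A⦄, a ≤ b → b ∈ U → a ∈ U

/-- Application of downsets: `U·V = {z | ∃ x ∈ U, y ∈ V, xy defined, z ≤ xy}`. -/
def appSet (ap : A → A → Option A) (U V : Set A) : Set A :=
  {z | ∃ x ∈ U, ∃ y ∈ V, ∃ c, ap x y = some c ∧ z ≤ c}

/-- The implication of downsets: `U ⇒ V = {a | ∀ b ∈ U, ab defined and ab ∈ V}`. -/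
def impSet (ap : A → A → Option A) (U V : Set A) : Set A :=
  {a | ∀ b ∈ U, ∃ c, ap a b = some c ∧ c ∈ V}

/-- The set `[f]` of realizers of an `(n+1)`-ary partial function, in the ordered weak
sense. -/
def OrdRealizers (ap : A → A → Option A) {n : ℕ}
    (f : (Fin (n + 1) → A) → Option A) : Set A :=
  {r | (∀ x : Fin n → A, (apTuple ap r x).isSome) ∧
       ∀ (x : Fin (n + 1) → A) (v : A), f x = some v →
         ∃ w, apTuple ap r x = some w ∧ w ≤ v}

/-- An external filter: a collection of downsets, upward closed under inclusion (among
downsets) and closed under application. -/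
def ExternalFilter (ap : A → A → Option A) (φ : Set (Set A)) : Prop :=
  (∀ U ∈ φ, IsDownset U) ∧
  (∀ U ∈ φ, ∀ V : Set A, IsDownset V → U ⊆ V → V ∈ φ) ∧
  (∀ U ∈ φ, ∀ V ∈ φ, (∀ x ∈ U, ∀ y ∈ V, (ap x y).isSome) → appSet ap U V ∈ φ)

/-- `φ` is combinatory complete: it contains the set of realizers of every partial
combinatory function. -/
def CombComplete (ap : A → A → Option A) (φ : Set (Set A)) : Prop :=
  ∀ (n : ℕ) (f : (Fin (n + 1) → A) → Option A), PCF ap (n + 1) f →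
    OrdRealizers ap f ∈ φ

/-- The pairing function `(x, y, z) ↦ (z x) y`. -/
def pairFn (ap : A → A → Option A) : (Fin 3 → A) → Option A :=
  fun x => (ap (x 2) (x 0)).bind fun u => ap u (x 1)

/-- The meet of two downsets, given by pairing: `U ∧ V = (p·U)·V` where `p` is the set
of realizers of the pairing function. -/
def meetSet (ap : A → A → Option A) (U V : Set A) : Set A :=
  appSet ap (appSet ap (OrdRealizers ap (pairFn ap)) U) V

section Aux

set_option linter.unusedSectionVars false

variable {ap : A → A → Option A}

lemma apTuple_one (r a : A) : apTuple ap r ![a] = ap r a := by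
  simp [apTuple, List.foldlM]

lemma apTuple_two (r a b : A) :
    apTuple ap r ![a, b] = (ap r a).bind fun u => ap u b := by
  simp [apTuple, List.foldlM]

lemma apTuple_three (r a b c : A) :
    apTuple ap r ![a, b, c] = (ap r a).bind fun u => (ap u b).bind fun v => ap v c := by
  simp [apTuple, List.foldlM]

lemma apTuple_four (r a b c d : A) :
    apTuple ap r ![a, b, c, d] =
      (ap r a).bind fun u => (ap u b).bind fun v => (ap v c).bind fun w => ap w d := by
  simp [apTuple, List.foldlM]

lemma bind_isSome {o : Option A} {f : A → Option A} (h : (o.bind f).isSome) :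
    ∃ a, o = some a ∧ (f a).isSome := by
  cases o <;> simp_all

lemma tot1 {r : A} (h : ∀ x : Fin 1 → A, (apTuple ap r x).isSome) (a : A) :
    ∃ c, ap r a = some c := by
  have := h ![a]; rw [apTuple_one] at this; exact Option.isSome_iff_exists.mp this

lemma tot2 {r : A} (h : ∀ x : Fin 2 → A, (apTuple ap r x).isSome) (a b : A) :
    ∃ c d, ap r a = some c ∧ ap c b = some d := by
  have := h ![a, b]; rw [apTuple_two] at this
  obtain ⟨c, hc, h2⟩ := bind_isSome this
  obtain ⟨d, hd⟩ := Option.isSome_iff_exists.mp h2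
  exact ⟨c, d, hc, hd⟩

lemma tot3 {r : A} (h : ∀ x : Fin 3 → A, (apTuple ap r x).isSome) (a b c : A) :
    ∃ u v w, ap r a = some u ∧ ap u b = some v ∧ ap v c = some w := by
  have := h ![a, b, c]; rw [apTuple_three] at this
  obtain ⟨u, hu, h2⟩ := bind_isSome this
  obtain ⟨v, hv, h3⟩ := bind_isSome h2
  obtain ⟨w, hw⟩ := Option.isSome_iff_exists.mp h3
  exact ⟨u, v, w, hu, hv, hw⟩

lemma real2 {f : (Fin 2 → A) → Option A} {r v a b : A}
    (hr : r ∈ OrdRealizers ap f) (h : f ![a, b] = some v) :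
    ∃ c w, ap r a = some c ∧ ap c b = some w ∧ w ≤ v := by
  obtain ⟨w, hw, hwv⟩ := hr.2 ![a, b] v h
  rw [apTuple_two] at hw
  obtain ⟨c, hc, hcw⟩ := Option.bind_eq_some_iff.mp hw
  exact ⟨c, w, hc, hcw, hwv⟩

lemma real3 {f : (Fin 3 → A) → Option A} {r v a b c : A}
    (hr : r ∈ OrdRealizers ap f) (h : f ![a, b, c] = some v) :
    ∃ u u' w, ap r a = some u ∧ ap u b = some u' ∧ ap u' c = some w ∧ w ≤ v := by
  obtain ⟨w, hw, hwv⟩ := hr.2 ![a, b, c] v h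
  rw [apTuple_three] at hw
  obtain ⟨u, hu, hw2⟩ := Option.bind_eq_some_iff.mp hw
  obtain ⟨u', hu', hw3⟩ := Option.bind_eq_some_iff.mp hw2
  exact ⟨u, u', w, hu, hu', hw3, hwv⟩

lemma real4 {f : (Fin 4 → A) → Option A} {r v a b c d : A}
    (hr : r ∈ OrdRealizers ap f) (h : f ![a, b, c, d] = some v) :
    ∃ u1 u2 u3 w, ap r a = some u1 ∧ ap u1 b = some u2 ∧ ap u2 c = some u3 ∧
      ap u3 d = some w ∧ w ≤ v := by
  obtain ⟨w, hw, hwv⟩ := hr.2 ![a, b, c, d] v h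
  rw [apTuple_four] at hw
  obtain ⟨u1, h1, hw2⟩ := Option.bind_eq_some_iff.mp hw
  obtain ⟨u2, h2, hw3⟩ := Option.bind_eq_some_iff.mp hw2
  obtain ⟨u3, h3, hw4⟩ := Option.bind_eq_some_iff.mp hw3
  exact ⟨u1, u2, u3, w, h1, h2, h3, hw4, hwv⟩

lemma appSet_downset (U V : Set A) : IsDownset (appSet ap U V) :=
  fun a b hab ⟨x, hx, y, hy, c, hc, hbc⟩ => ⟨x, hx, y, hy, c, hc, hab.trans hbc⟩

lemma impSet_downset (hmono : MonotoneAp ap) {V : Set A} (hV : IsDownset V) (U : Set A) :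
    IsDownset (impSet ap U V) := by
  intro a b hab hb c hc
  obtain ⟨d, hd, hdV⟩ := hb c hc
  obtain ⟨z, hz, hzd⟩ := hmono a b c c d hab le_rfl hd
  exact ⟨z, hz, hV hzd hdV⟩

lemma meet_mem {U V : Set A} {p u v c1 c2 m : A}
    (hp : p ∈ OrdRealizers ap (pairFn ap)) (hu : u ∈ U) (hv : v ∈ V)
    (h1 : ap p u = some c1) (h2 : ap c1 v = some c2) (hm : m ≤ c2) :
    m ∈ meetSet ap U V :=
  ⟨c1, ⟨p, hp, u, hu, c1, h1, le_rfl⟩, v, hv, c2, h2, hm⟩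

lemma meet_elem (hmono : MonotoneAp ap) {U V : Set A} {m : A} (hm : m ∈ meetSet ap U V) :
    ∃ p ∈ OrdRealizers ap (pairFn ap), ∃ u ∈ U, ∃ v ∈ V, ∃ c1 c2,
      ap p u = some c1 ∧ ap c1 v = some c2 ∧ m ≤ c2 := by
  obtain ⟨q, ⟨p, hp, u, hu, d, hd, hqd⟩, v, hv, c, hc, hmc⟩ := hm
  obtain ⟨c1', c2, h1, h2⟩ := tot2 hp.1 u v
  rw [hd] at h1
  obtain rfl := Option.some.inj h1
  obtain ⟨z, hz, hzc2⟩ := hmono q d v v c2 hqd le_rfl h2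
  rw [hc] at hz
  obtain rfl := Option.some.inj hz
  exact ⟨p, hp, u, hu, v, hv, d, c2, hd, h2, hmc.trans hzc2⟩

lemma pair_fst (hmono : MonotoneAp ap) {U V : Set A} (hU : IsDownset U) {m k : A}
    (hm : m ∈ meetSet ap U V)
    (hk : k ∈ OrdRealizers ap (fun x : Fin 2 → A => some (x 0))) :
    ∃ t, ap m k = some t ∧ t ∈ U := by
  obtain ⟨p, hp, u, hu, v, hv, c1, c2, h1, h2, hmc⟩ := meet_elem hmono hm
  obtain ⟨e1, w, he1, hew, hwu⟩ :=
    real2 hk (show (fun x : Fin 2 → A => some (x 0)) ![u, v] = some u by simp)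
  have hpf : pairFn ap ![u, v, k] = some w := by
    simp [pairFn, he1, hew]
  obtain ⟨f1, f2, m1, hf1, hf2, hm1, hm1w⟩ := real3 hp hpf
  rw [h1] at hf1; obtain rfl := Option.some.inj hf1
  rw [h2] at hf2; obtain rfl := Option.some.inj hf2
  obtain ⟨t, ht, htm1⟩ := hmono m c2 k k m1 hmc le_rfl hm1
  exact ⟨t, ht, hU (htm1.trans (hm1w.trans hwu)) hu⟩

lemma pair_snd (hmono : MonotoneAp ap) {U V : Set A} (hV : IsDownset V) {m k : A}
    (hm : m ∈ meetSet ap U V)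
    (hk : k ∈ OrdRealizers ap (fun x : Fin 2 → A => some (x 1))) :
    ∃ t, ap m k = some t ∧ t ∈ V := by
  obtain ⟨p, hp, u, hu, v, hv, c1, c2, h1, h2, hmc⟩ := meet_elem hmono hm
  obtain ⟨e1, w, he1, hew, hwv⟩ :=
    real2 hk (show (fun x : Fin 2 → A => some (x 1)) ![u, v] = some v by simp)
  have hpf : pairFn ap ![u, v, k] = some w := by
    simp [pairFn, he1, hew]
  obtain ⟨f1, f2, m1, hf1, hf2, hm1, hm1w⟩ := real3 hp hpf
  rw [h1] at hf1; obtain rfl := Option.some.inj hf1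
  rw [h2] at hf2; obtain rfl := Option.some.inj hf2
  obtain ⟨t, ht, htm1⟩ := hmono m c2 k k m1 hmc le_rfl hm1
  exact ⟨t, ht, hV (htm1.trans (hm1w.trans hwv)) hv⟩

end Aux

/-- For an order partial combinatory algebra `A` and a combinatory complete external
filter `φ`, the relation `U ≪ V ⟺ (U ⇒ V) ∈ φ` is a preorder on downsets; it has
finite meets given by pairing, and `⇒` is a Heyting implication with respect to this
meet. -/
theorem downset_preorder_heyting (ap : A → A → Option A) (hmono : MonotoneAp ap)
    (φ : Set (Set A)) (hφ : ExternalFilter ap φ) (hcc : CombComplete ap φ) :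
    (∀ U : Set A, IsDownset U → impSet ap U U ∈ φ) ∧
    (∀ U V W : Set A, IsDownset U → IsDownset V → IsDownset W →
      impSet ap U V ∈ φ → impSet ap V W ∈ φ → impSet ap U W ∈ φ) ∧
    (∀ U V : Set A, IsDownset U → IsDownset V →
      impSet ap (meetSet ap U V) U ∈ φ ∧ impSet ap (meetSet ap U V) V ∈ φ ∧
      ∀ W : Set A, IsDownset W → impSet ap W U ∈ φ → impSet ap W V ∈ φ →
        impSet ap W (meetSet ap U V) ∈ φ) ∧
    (∀ U V W : Set A, IsDownset U → IsDownset V → IsDownset W →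
      (impSet ap W (impSet ap U V) ∈ φ ↔ impSet ap (meetSet ap W U) V ∈ φ)) := by
  refine ⟨?_, ?_, ?_, ?_⟩
  · -- identity
    intro U hU
    have hI := hcc 0 (fun x => some (x 0)) (PCF.proj 1 0)
    refine hφ.2.1 _ hI _ (impSet_downset hmono hU U) ?_
    intro r hr b hb
    obtain ⟨w, hw, hwb⟩ := hr.2 ![b] b (by simp)
    rw [apTuple_one] at hw
    exact ⟨w, hw, hU hwb hb⟩
  · -- composition
    intro U V W hU hV hW hUV hVW
    have hfP : PCF ap 3 (fun x : Fin 3 → A => (ap (x 1) (x 2)).bind fun b => ap (x 0) b) :=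
      PCF.app (PCF.proj 3 0) (PCF.app (PCF.proj 3 1) (PCF.proj 3 2))
    have hR := hcc 2 _ hfP
    have h1 : appSet ap (OrdRealizers ap
        (fun x : Fin 3 → A => (ap (x 1) (x 2)).bind fun b => ap (x 0) b))
        (impSet ap V W) ∈ φ := by
      refine hφ.2.2 _ hR _ hVW ?_
      intro r hr s hs
      obtain ⟨c, d, hc, hd⟩ := tot2 hr.1 s s
      simp [hc]
    have h2 := hφ.2.2 _ h1 _ hUV ?defined
    case defined =>
      rintro x ⟨r, hr, s, hs, c, hc, hxc⟩ t ht
      obtain ⟨c', d, hc', hd⟩ := tot2 hr.1 s t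
      rw [hc] at hc'
      obtain rfl := Option.some.inj hc'
      obtain ⟨z, hz, _⟩ := hmono x c t t d hxc le_rfl hd
      simp [hz]
    refine hφ.2.1 _ h2 _ (impSet_downset hmono hW U) ?_
    rintro z ⟨q, ⟨r, hr, s, hs, c, hc, hqc⟩, t, ht, e, he, hze⟩ b hb
    obtain ⟨c1, hc1, hc1V⟩ := ht b hb
    obtain ⟨c2, hc2, hc2W⟩ := hs c1 hc1V
    have hfv : (fun x : Fin 3 → A => (ap (x 1) (x 2)).bind fun b => ap (x 0) b) ![s, t, b]
        = some c2 := by simp [hc1, hc2]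
    obtain ⟨u1, u2, w, k1, k2, k3, hw2⟩ := real3 hr hfv
    rw [hc] at k1; obtain rfl := Option.some.inj k1
    obtain ⟨e', he', hed⟩ := hmono q c t t u2 hqc le_rfl k2
    rw [he] at he'; obtain rfl := Option.some.inj he'
    obtain ⟨y, hy, hyw⟩ := hmono z u2 b b w (hze.trans hed) le_rfl k3
    exact ⟨y, hy, hW (hyw.trans hw2) hc2W⟩
  · -- meets
    intro U V hU hV
    have hP : OrdRealizers ap (pairFn ap) ∈ φ :=
      hcc 2 (pairFn ap) (PCF.app (PCF.app (PCF.proj 3 2) (PCF.proj 3 0)) (PCF.proj 3 1))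
    have hK0 := hcc 1 (fun x : Fin 2 → A => some (x 0)) (PCF.proj 2 0)
    have hK1 := hcc 1 (fun x : Fin 2 → A => some (x 1)) (PCF.proj 2 1)
    have hE : PCF ap 2 (fun x : Fin 2 → A => ap (x 1) (x 0)) :=
      PCF.app (PCF.proj 2 1) (PCF.proj 2 0)
    have hEφ := hcc 1 _ hE
    refine ⟨?_, ?_, ?_⟩
    · -- first projection
      have hA1 : appSet ap (OrdRealizers ap (fun x : Fin 2 → A => ap (x 1) (x 0)))
          (OrdRealizers ap (fun x : Fin 2 → A => some (x 0))) ∈ φ := by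
        refine hφ.2.2 _ hEφ _ hK0 ?_
        intro r hr k hk
        obtain ⟨c, hc⟩ := tot1 hr.1 k
        simp [hc]
      refine hφ.2.1 _ hA1 _ (impSet_downset hmono hU _) ?_
      rintro z ⟨r, hr, k, hk, c, hc, hzc⟩ m hm
      obtain ⟨t, ht, htU⟩ := pair_fst hmono hU hm hk
      have hev : (fun x : Fin 2 → A => ap (x 1) (x 0)) ![k, m] = some t := by simpa using ht
      obtain ⟨c', w, hc', hw, hwt⟩ := real2 hr hev
      rw [hc] at hc'; obtain rfl := Option.some.inj hc'
      obtain ⟨y, hy, hyw⟩ := hmono z c m m w hzc le_rfl hw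
      exact ⟨y, hy, hU (hyw.trans hwt) htU⟩
    · -- second projection
      have hA1 : appSet ap (OrdRealizers ap (fun x : Fin 2 → A => ap (x 1) (x 0)))
          (OrdRealizers ap (fun x : Fin 2 → A => some (x 1))) ∈ φ := by
        refine hφ.2.2 _ hEφ _ hK1 ?_
        intro r hr k hk
        obtain ⟨c, hc⟩ := tot1 hr.1 k
        simp [hc]
      refine hφ.2.1 _ hA1 _ (impSet_downset hmono hV _) ?_
      rintro z ⟨r, hr, k, hk, c, hc, hzc⟩ m hm
      obtain ⟨t, ht, htV⟩ := pair_snd hmono hV hm hk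
      have hev : (fun x : Fin 2 → A => ap (x 1) (x 0)) ![k, m] = some t := by simpa using ht
      obtain ⟨c', w, hc', hw, hwt⟩ := real2 hr hev
      rw [hc] at hc'; obtain rfl := Option.some.inj hc'
      obtain ⟨y, hy, hyw⟩ := hmono z c m m w hzc le_rfl hw
      exact ⟨y, hy, hV (hyw.trans hwt) htV⟩
    · -- pairing intro
      intro W hW hS hT
      have hgP : PCF ap 4 (fun x : Fin 4 → A =>
          ((ap (x 1) (x 3)).bind fun b => ap (x 0) b).bind fun a =>
            (ap (x 2) (x 3)).bind fun b => ap a b) :=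
        PCF.app (PCF.app (PCF.proj 4 0) (PCF.app (PCF.proj 4 1) (PCF.proj 4 3)))
          (PCF.app (PCF.proj 4 2) (PCF.proj 4 3))
      have hRg := hcc 3 _ hgP
      have hX1 := hφ.2.2 _ hRg _ hP ?d1
      case d1 =>
        rintro r hr p hp
        obtain ⟨u, v, w, h1, _, _⟩ := tot3 hr.1 p p p
        simp [h1]
      have hX2 := hφ.2.2 _ hX1 _ hS ?d2
      case d2 =>
        rintro x ⟨r, hr, p, hp, c, hc, hxc⟩ s hs
        obtain ⟨u, v, w, h1, h2, h3⟩ := tot3 hr.1 p s s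
        rw [hc] at h1; obtain rfl := Option.some.inj h1
        obtain ⟨z, hz, _⟩ := hmono x c s s v hxc le_rfl h2
        simp [hz]
      have hX3 := hφ.2.2 _ hX2 _ hT ?d3
      case d3 =>
        rintro x ⟨q, ⟨r, hr, p, hp, c, hc, hqc⟩, s, hs, e, he, hxe⟩ t ht
        obtain ⟨u, v, w, h1, h2, h3⟩ := tot3 hr.1 p s t
        rw [hc] at h1; obtain rfl := Option.some.inj h1
        obtain ⟨e', he', hev⟩ := hmono q c s s v hqc le_rfl h2
        rw [he] at he'; obtain rfl := Option.some.inj he'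
        obtain ⟨z, hz, _⟩ := hmono x v t t w (hxe.trans hev) le_rfl h3
        simp [hz]
      refine hφ.2.1 _ hX3 _ (impSet_downset hmono (appSet_downset _ _) W) ?_
      rintro z ⟨q2, ⟨q1, ⟨r, hr, p, hp, e1, he1, hq1⟩, s, hs, e2, he2, hq2⟩,
        t, ht, e3, he3, hze3⟩ w hw
      obtain ⟨u, hsw, huU⟩ := hs w hw
      obtain ⟨v, htw, hvV⟩ := ht w hw
      obtain ⟨c1, c2, hc1, hc2⟩ := tot2 hp.1 u v
      have hg : (fun x : Fin 4 → A =>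
          ((ap (x 1) (x 3)).bind fun b => ap (x 0) b).bind fun a =>
            (ap (x 2) (x 3)).bind fun b => ap a b) ![p, s, t, w] = some c2 := by
        simp [hsw, htw, hc1, hc2]
      obtain ⟨u1, u2, u3, w4, k1, k2, k3, k4, hw4⟩ := real4 hr hg
      rw [he1] at k1; obtain rfl := Option.some.inj k1
      obtain ⟨f2, hf2, hf2'⟩ := hmono q1 e1 s s u2 hq1 le_rfl k2
      rw [he2] at hf2; obtain rfl := Option.some.inj hf2
      obtain ⟨f3, hf3, hf3'⟩ := hmono q2 u2 t t u3 (hq2.trans hf2') le_rfl k3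
      rw [he3] at hf3; obtain rfl := Option.some.inj hf3
      obtain ⟨y, hy, hyw4⟩ := hmono z u3 w w w4 (hze3.trans hf3') le_rfl k4
      exact ⟨y, hy, appSet_downset _ _ (hyw4.trans hw4)
        (meet_mem hp huU hvV hc1 hc2 le_rfl)⟩
  · -- Heyting adjunction
    intro U V W hU hV hW
    have hP : OrdRealizers ap (pairFn ap) ∈ φ :=
      hcc 2 (pairFn ap) (PCF.app (PCF.app (PCF.proj 3 2) (PCF.proj 3 0)) (PCF.proj 3 1))
    have hK0 := hcc 1 (fun x : Fin 2 → A => some (x 0)) (PCF.proj 2 0)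
    have hK1 := hcc 1 (fun x : Fin 2 → A => some (x 1)) (PCF.proj 2 1)
    constructor
    · -- forward
      intro hS
      have hgP : PCF ap 4 (fun x : Fin 4 → A =>
          ((ap (x 3) (x 1)).bind fun b => ap (x 0) b).bind fun a =>
            (ap (x 3) (x 2)).bind fun b => ap a b) :=
        PCF.app (PCF.app (PCF.proj 4 0) (PCF.app (PCF.proj 4 3) (PCF.proj 4 1)))
          (PCF.app (PCF.proj 4 3) (PCF.proj 4 2))
      have hRg := hcc 3 _ hgP
      have hX1 := hφ.2.2 _ hRg _ hS ?e1
      case e1 =>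
        rintro r hr s hs
        obtain ⟨u, v, w, h1, _, _⟩ := tot3 hr.1 s s s
        simp [h1]
      have hX2 := hφ.2.2 _ hX1 _ hK0 ?e2
      case e2 =>
        rintro x ⟨r, hr, s, hs, c, hc, hxc⟩ k hk
        obtain ⟨u, v, w, h1, h2, h3⟩ := tot3 hr.1 s k k
        rw [hc] at h1; obtain rfl := Option.some.inj h1
        obtain ⟨z, hz, _⟩ := hmono x c k k v hxc le_rfl h2
        simp [hz]
      have hX3 := hφ.2.2 _ hX2 _ hK1 ?e3
      case e3 =>
        rintro x ⟨q, ⟨r, hr, s, hs, c, hc, hqc⟩, k, hk, e, he, hxe⟩ k' hk'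
        obtain ⟨u, v, w, h1, h2, h3⟩ := tot3 hr.1 s k k'
        rw [hc] at h1; obtain rfl := Option.some.inj h1
        obtain ⟨e', he', hev⟩ := hmono q c k k v hqc le_rfl h2
        rw [he] at he'; obtain rfl := Option.some.inj he'
        obtain ⟨z, hz, _⟩ := hmono x v k' k' w (hxe.trans hev) le_rfl h3
        simp [hz]
      refine hφ.2.1 _ hX3 _ (impSet_downset hmono hV _) ?_
      rintro z ⟨q2, ⟨q1, ⟨r, hr, s, hsS, e1, he1, hq1⟩, k, hk, e2, he2, hq2⟩,
        k', hk', e3, he3, hze3⟩ m hm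
      obtain ⟨t1, hmk, ht1W⟩ := pair_fst hmono hW hm hk
      obtain ⟨t2, hmk', ht2U⟩ := pair_snd hmono hU hm hk'
      obtain ⟨c, hsc, hcImp⟩ := hsS t1 ht1W
      obtain ⟨v, hcv, hvV⟩ := hcImp t2 ht2U
      have hg : (fun x : Fin 4 → A =>
          ((ap (x 3) (x 1)).bind fun b => ap (x 0) b).bind fun a =>
            (ap (x 3) (x 2)).bind fun b => ap a b) ![s, k, k', m] = some v := by
        simp [hmk, hmk', hsc, hcv]
      obtain ⟨u1, u2, u3, w4, k1, k2, k3, k4, hw4⟩ := real4 hr hg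
      rw [he1] at k1; obtain rfl := Option.some.inj k1
      obtain ⟨f2, hf2, hf2'⟩ := hmono q1 e1 k k u2 hq1 le_rfl k2
      rw [he2] at hf2; obtain rfl := Option.some.inj hf2
      obtain ⟨f3, hf3, hf3'⟩ := hmono q2 u2 k' k' u3 (hq2.trans hf2') le_rfl k3
      rw [he3] at hf3; obtain rfl := Option.some.inj hf3
      obtain ⟨y, hy, hyw4⟩ := hmono z u3 m m w4 (hze3.trans hf3') le_rfl k4
      exact ⟨y, hy, hV (hyw4.trans hw4) hvV⟩
    · -- backward
      intro hT
      have hgP : PCF ap 4 (fun x : Fin 4 → A =>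
          (((ap (x 1) (x 2)).bind fun a => ap a (x 3))).bind fun b => ap (x 0) b) :=
        PCF.app (PCF.proj 4 0)
          (PCF.app (PCF.app (PCF.proj 4 1) (PCF.proj 4 2)) (PCF.proj 4 3))
      have hRg := hcc 3 _ hgP
      have hX1 := hφ.2.2 _ hRg _ hT ?f1
      case f1 =>
        rintro r hr t ht
        obtain ⟨u, v, w, h1, _, _⟩ := tot3 hr.1 t t t
        simp [h1]
      have hX2 := hφ.2.2 _ hX1 _ hP ?f2
      case f2 =>
        rintro x ⟨r, hr, t, ht, c, hc, hxc⟩ p hp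
        obtain ⟨u, v, w, h1, h2, h3⟩ := tot3 hr.1 t p p
        rw [hc] at h1; obtain rfl := Option.some.inj h1
        obtain ⟨z, hz, _⟩ := hmono x c p p v hxc le_rfl h2
        simp [hz]
      refine hφ.2.1 _ hX2 _ (impSet_downset hmono (impSet_downset hmono hV U) W) ?_
      rintro z ⟨q1, ⟨r, hr, t, htT, e1, he1, hq1⟩, p, hp, e2, he2, hze2⟩ w hw
      obtain ⟨u1, u2, u3, h1, h2, h3⟩ := tot3 hr.1 t p w
      rw [he1] at h1; obtain rfl := Option.some.inj h1
      obtain ⟨f2, hf2, hf2'⟩ := hmono q1 e1 p p u2 hq1 le_rfl h2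
      rw [he2] at hf2; obtain rfl := Option.some.inj hf2
      obtain ⟨y, hy, hyu3⟩ := hmono z u2 w w u3 (hze2.trans hf2') le_rfl h3
      refine ⟨y, hy, impSet_downset hmono hV U hyu3 ?_⟩
      intro u hu
      obtain ⟨c1, c2, hc1, hc2⟩ := tot2 hp.1 w u
      obtain ⟨v, htv, hvV⟩ := htT c2 (meet_mem hp hw hu hc1 hc2 le_rfl)
      have hg : (fun x : Fin 4 → A =>
          (((ap (x 1) (x 2)).bind fun a => ap a (x 3))).bind fun b => ap (x 0) b)
          ![t, p, w, u] = some v := by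
        simp [hc1, hc2, htv]
      obtain ⟨v1, v2, v3, w4, k1, k2, k3, k4, hw4⟩ := real4 hr hg
      rw [he1] at k1; obtain rfl := Option.some.inj k1
      rw [h2] at k2; obtain rfl := Option.some.inj k2
      rw [h3] at k3; obtain rfl := Option.some.inj k3
      exact ⟨w4, k4, hV hw4 hvV⟩
end

section
/- Any weakly complete internal category is weakly algebraically complete: every endofunctor F : C → C of a weakly complete internal category C has an initial Lambek algebra, constructed as the limit of the underlying-object functor U : Alg(F) → C, where the limit structure map a : F(lim U) → lim U is induced by the canonical natural transformation FU → U. -/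
open CategoryTheory CategoryTheory.Limits

universe v u

variable {C : Type u} [Category.{v} C]

/-- Given an endofunctor `F` such that the forgetful functor from `F`-algebras has a
limit, the limit of the underlying-object functor carries an algebra structure, whose
structure map is induced by the canonical natural transformation `F ∘ U ⟶ U`. -/
noncomputable def limitAlgebra (F : C ⥤ C) [HasLimit (Endofunctor.Algebra.forget F)] :
    Endofunctor.Algebra F where
  a := limit (Endofunctor.Algebra.forget F)
  str := limit.lift (Endofunctor.Algebra.forget F)
    { pt := F.obj (limit (Endofunctor.Algebra.forget F))
      π :=
        { app := fun A =>
            F.map (limit.π (Endofunctor.Algebra.forget F) A) ≫ A.str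
          naturality := by
            intro A B f
            dsimp
            erw [Category.id_comp, Category.assoc, ← f.h, ← Category.assoc,
              ← F.map_comp,
              show limit.π (Endofunctor.Algebra.forget F) A ≫ f.f =
                  limit.π (Endofunctor.Algebra.forget F) B from
                limit.w (Endofunctor.Algebra.forget F) f]
            rfl } }

/-- Every endofunctor of a weakly complete category has an initial Lambek algebra:
if the limit of the forgetful functor `U : Alg(F) ⥤ C` exists, then `lim U` with the
induced structure map is an initial `F`-algebra. -/
theorem limitAlgebra_isInitial (F : C ⥤ C)
    [HasLimit (Endofunctor.Algebra.forget F)] :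
    Nonempty (IsInitial (limitAlgebra F)) := by
  -- the canonical algebra morphism from the limit algebra to any algebra
  let hom : ∀ A : Endofunctor.Algebra F, limitAlgebra F ⟶ A := fun A =>
    { f := limit.π (Endofunctor.Algebra.forget F) A
      h := by
        simp [limitAlgebra]
        erw [limit.lift_π]
        rfl }
  -- the projection to the limit algebra itself is the identity
  have hp : limit.π (Endofunctor.Algebra.forget F) (limitAlgebra F) =
      𝟙 (limit (Endofunctor.Algebra.forget F)) := by
    apply limit.hom_ext
    intro A
    exact (limit.w (Endofunctor.Algebra.forget F) (hom A)).trans (Category.id_comp _).symm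
  refine ⟨IsInitial.ofUniqueHom hom fun A m => ?_⟩
  ext
  have := limit.w (Endofunctor.Algebra.forget F) m
  rw [hp] at this
  exact (Category.id_comp _).symm.trans this
end
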